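/- Let g be a natural number. The map sending (B₁, …, B_g) ∈ Sp(1)^g to the simultaneous-conjugation orbit of the tuple (B₁, …, B_g, 𝐢, 𝐣, −𝐤) is a bijection from Sp(1)^g onto the quotient by simultaneous conjugation of the set {(B₁, …, B_g, C₁, C₂, C₃) : each Bₖ is a unit quaternion, each Cᵢ is a purely imaginary unit quaternion, and C₁C₂C₃ = 1}. (This is the identification L_α ≅ (S³)^g of the Lagrangian associated to the standard attaching curves of a genus g handlebody in the traceless character variety.) -/

import Mathlib

open Quaternion

noncomputable def qi : ℍ[ℝ] := ⟨0, 1, 0, 0⟩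
noncomputable def qj : ℍ[ℝ] := ⟨0, 0, 1, 0⟩
noncomputable def qk : ℍ[ℝ] := ⟨0, 0, 0, 1⟩

lemma norm_qi : ‖qi‖ = 1 := by
  have h : ‖qi‖ * ‖qi‖ = 1 := by
    rw [← Quaternion.normSq_eq_norm_mul_self, Quaternion.normSq_def']; simp [qi, Quaternion.normSq_def']
  nlinarith [norm_nonneg qi]

lemma norm_qj : ‖qj‖ = 1 := by
  have h : ‖qj‖ * ‖qj‖ = 1 := by
    rw [← Quaternion.normSq_eq_norm_mul_self, Quaternion.normSq_def']; simp [qj, Quaternion.normSq_def']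
  nlinarith [norm_nonneg qj]

lemma norm_qk : ‖qk‖ = 1 := by
  have h : ‖qk‖ * ‖qk‖ = 1 := by
    rw [← Quaternion.normSq_eq_norm_mul_self, Quaternion.normSq_def']; simp [qk, Quaternion.normSq_def']
  nlinarith [norm_nonneg qk]

lemma re_qi : qi.re = 0 := rfl
lemma re_qj : qj.re = 0 := rfl
lemma re_qk : qk.re = 0 := rfl

lemma qi_mul_qj_mul_neg_qk : qi * qj * (-qk) = 1 := by
  ext <;> simp only [Quaternion.re_mul, Quaternion.imI_mul, Quaternion.imJ_mul, Quaternion.imK_mul, Quaternion.re_neg, Quaternion.imI_neg, Quaternion.imJ_neg, Quaternion.imK_neg] <;> simp [qi, qj, qk]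

/-- Simultaneous conjugation by unit quaternions, as a relation on tuples of quaternions. -/
def uConj {ι : Type} (x y : ι → ℍ[ℝ]) : Prop :=
  ∃ D : ℍ[ℝ], ‖D‖ = 1 ∧ ∀ k, y k = D * x k * D⁻¹

theorem uConj_equivalence (ι : Type) : Equivalence (@uConj ι) := by
  constructor
  · intro x
    exact ⟨1, norm_one, fun k => by simp⟩
  · rintro x y ⟨D, hD, h⟩
    have hD0 : D ≠ 0 := by
      intro h0; rw [h0, norm_zero] at hD; norm_num at hD
    refine ⟨D⁻¹, by rw [norm_inv, hD]; norm_num, fun k => ?_⟩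
    rw [h k, inv_inv]
    simp [mul_assoc, inv_mul_cancel₀ hD0, inv_mul_cancel_left₀ hD0]
  · rintro x y z ⟨D, hD, h⟩ ⟨E, hE, h'⟩
    refine ⟨E * D, by rw [norm_mul, hD, hE]; norm_num, fun k => ?_⟩
    rw [h' k, h k, mul_inv_rev]
    simp [mul_assoc]

/-- The setoid of simultaneous conjugation on tuples of quaternions. -/
def conjSetoid (ι : Type) : Setoid (ι → ℍ[ℝ]) := ⟨uConj, uConj_equivalence ι⟩

/-- The setoid of simultaneous conjugation restricted to a conjugation-invariant subset. -/
def conjSetoidOn {ι : Type} (S : Set (ι → ℍ[ℝ])) : Setoid S :=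
  (conjSetoid ι).comap Subtype.val

/-- The set of tuples `(B₁, …, B_g, C₁, C₂, C₃)` with each `Bₖ` a unit quaternion, each `Cᵢ`
a purely imaginary unit quaternion, and `C₁C₂C₃ = 1`. -/
def S5 (g : ℕ) : Set (Fin g ⊕ Fin 3 → ℍ[ℝ]) :=
  {x | (∀ k : Fin g, ‖x (Sum.inl k)‖ = 1) ∧
    (∀ j : Fin 3, ‖x (Sum.inr j)‖ = 1 ∧ (x (Sum.inr j)).re = 0) ∧
    x (Sum.inr 0) * x (Sum.inr 1) * x (Sum.inr 2) = 1}

lemma mem_S5 {g : ℕ} (B : {B : Fin g → ℍ[ℝ] // ∀ k, ‖B k‖ = 1}) :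
    Sum.elim B.val ![qi, qj, -qk] ∈ S5 g := by
  refine ⟨fun k => B.property k, fun j => ?_, ?_⟩
  · fin_cases j <;>
      simp [norm_qi, norm_qj, norm_qk, re_qi, re_qj, re_qk]
  · show qi * qj * (-qk) = 1
    exact qi_mul_qj_mul_neg_qk

namespace HandlebodyAux

open Quaternion

lemma normSq_one_of_norm_one {a : ℍ[ℝ]} (h : ‖a‖ = 1) : normSq a = 1 := by
  rw [Quaternion.normSq_eq_norm_mul_self, h]; norm_num

lemma sq_eq_neg_one {a : ℍ[ℝ]} (hn : ‖a‖ = 1) (hre : a.re = 0) : a * a = -1 := by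
  have h1 : star a = -a := Quaternion.star_eq_neg.mpr hre
  have h2 : a * star a = ((normSq a : ℝ) : ℍ[ℝ]) := Quaternion.self_mul_star a
  rw [h1, mul_neg, normSq_one_of_norm_one hn] at h2
  have h3 : -(a * a) = 1 := by simpa using h2
  rw [← h3, neg_neg]

lemma re_mul_comm (a b : ℍ[ℝ]) : (a * b).re = (b * a).re := by
  rw [Quaternion.re_mul, Quaternion.re_mul]; ring

lemma qi_mul_qi : qi * qi = -1 := by
  ext <;> simp only [Quaternion.re_mul, Quaternion.imI_mul, Quaternion.imJ_mul, Quaternion.imK_mul, Quaternion.re_neg, Quaternion.imI_neg, Quaternion.imJ_neg, Quaternion.imK_neg] <;> simp [qi]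

lemma qk_eq : qk = qi * qj := by
  ext <;> simp only [Quaternion.re_mul, Quaternion.imI_mul, Quaternion.imJ_mul, Quaternion.imK_mul, Quaternion.re_neg, Quaternion.imI_neg, Quaternion.imJ_neg, Quaternion.imK_neg] <;> simp [qi, qj, qk]

lemma exists_conj_qi {p : ℍ[ℝ]} (hn : ‖p‖ = 1) (hre : p.re = 0) :
    ∃ D : ℍ[ℝ], D ≠ 0 ∧ D * qi = p * D := by
  by_cases hp : p = -qi
  · refine ⟨qj, ?_, ?_⟩
    · intro h
      have := congrArg QuaternionAlgebra.imJ h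
      simp [qj] at this
    · subst hp; ext <;> simp only [Quaternion.re_mul, Quaternion.imI_mul, Quaternion.imJ_mul, Quaternion.imK_mul, Quaternion.re_neg, Quaternion.imI_neg, Quaternion.imJ_neg, Quaternion.imK_neg] <;> simp [qi, qj]
  · refine ⟨p + qi, ?_, ?_⟩
    · intro h
      exact hp (eq_neg_of_add_eq_zero_left h)
    · have hpp := sq_eq_neg_one hn hre
      rw [add_mul, mul_add, hpp, qi_mul_qi, add_comm]

lemma exists_conj_qj {q : ℍ[ℝ]} (hn : ‖q‖ = 1) (hre : q.re = 0) (hI : q.imI = 0) :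
    ∃ D : ℍ[ℝ], D ≠ 0 ∧ D * qi = qi * D ∧ D * qj = q * D := by
  have hsq : q.imJ ^ 2 + q.imK ^ 2 = 1 := by
    have := normSq_one_of_norm_one hn
    rw [Quaternion.normSq_def'] at this
    rw [hre, hI] at this
    linarith [this]
  by_cases hc : q.imJ = -1
  · have hd : q.imK = 0 := by nlinarith
    have hq : q = -qj := by ext <;> simp only [Quaternion.re_mul, Quaternion.imI_mul, Quaternion.imJ_mul, Quaternion.imK_mul, Quaternion.re_neg, Quaternion.imI_neg, Quaternion.imJ_neg, Quaternion.imK_neg] <;> simp [qj, hre, hI, hc, hd]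
    refine ⟨qi, ?_, rfl, ?_⟩
    · intro h
      have := congrArg QuaternionAlgebra.imI h
      simp [qi] at this
    · rw [hq]; ext <;> simp only [Quaternion.re_mul, Quaternion.imI_mul, Quaternion.imJ_mul, Quaternion.imK_mul, Quaternion.re_neg, Quaternion.imI_neg, Quaternion.imJ_neg, Quaternion.imK_neg] <;> simp [qi, qj]
  · refine ⟨⟨1 + q.imJ, q.imK, 0, 0⟩, ?_, ?_, ?_⟩
    · intro h
      have := congrArg QuaternionAlgebra.re h
      simp at this
      exact hc (by linarith)
    · set D : ℍ[ℝ] := ⟨1 + q.imJ, q.imK, 0, 0⟩ with hD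
      ext <;> simp only [Quaternion.re_mul, Quaternion.imI_mul, Quaternion.imJ_mul, Quaternion.imK_mul, Quaternion.re_neg, Quaternion.imI_neg, Quaternion.imJ_neg, Quaternion.imK_neg] <;> simp [hD, qi]
    · set D : ℍ[ℝ] := ⟨1 + q.imJ, q.imK, 0, 0⟩ with hD
      ext <;> simp only [Quaternion.re_mul, Quaternion.imI_mul, Quaternion.imJ_mul, Quaternion.imK_mul, Quaternion.re_neg, Quaternion.imI_neg, Quaternion.imJ_neg, Quaternion.imK_neg] <;> simp [hD, qj, Quaternion.re_mul, Quaternion.imI_mul, Quaternion.imJ_mul,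
        Quaternion.imK_mul, hre, hI] <;> nlinarith [hsq]

lemma exists_conj_pair {p q : ℍ[ℝ]} (hpn : ‖p‖ = 1) (hpr : p.re = 0)
    (hqn : ‖q‖ = 1) (hqr : q.re = 0) (hpq : (p * q).re = 0) :
    ∃ D : ℍ[ℝ], D ≠ 0 ∧ D * qi = p * D ∧ D * qj = q * D := by
  obtain ⟨D1, h1ne, h1⟩ := exists_conj_qi hpn hpr
  set q' := D1⁻¹ * q * D1 with hq'
  have hcancel : D1 * (D1⁻¹ * q) = q := by
    rw [← mul_assoc, mul_inv_cancel₀ h1ne, one_mul]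
  have hq'n : ‖q'‖ = 1 := by
    rw [hq', norm_mul, norm_mul, norm_inv, hqn, mul_one]
    exact inv_mul_cancel₀ (norm_ne_zero_iff.mpr h1ne)
  have hre' : q'.re = 0 := by
    rw [hq', re_mul_comm, hcancel, hqr]
  have hqi : (q' * qi).re = 0 := by
    have : q' * qi = D1⁻¹ * (q * p * D1) := by
      rw [hq', mul_assoc, h1, mul_assoc, ← mul_assoc q p D1]
    rw [this, re_mul_comm, mul_assoc, mul_inv_cancel₀ h1ne, mul_one,
      re_mul_comm q p, hpq]
  have hI : q'.imI = 0 := by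
    rw [Quaternion.re_mul] at hqi
    simp [qi] at hqi
    linarith
  obtain ⟨D2, h2ne, h2i, h2j⟩ := exists_conj_qj hq'n hre' hI
  refine ⟨D1 * D2, mul_ne_zero h1ne h2ne, ?_, ?_⟩
  · rw [mul_assoc, h2i, ← mul_assoc, h1, mul_assoc]
  · rw [mul_assoc, h2j, ← mul_assoc, hq']
    rw [show D1 * (D1⁻¹ * q * D1) = q * D1 by rw [← mul_assoc, hcancel]]
    rw [mul_assoc]

lemma uConj_of_ne_zero {ι : Type} {x y : ι → ℍ[ℝ]} (D : ℍ[ℝ]) (hD : D ≠ 0)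
    (h : ∀ k, y k * D = D * x k) : uConj x y := by
  set D' : ℍ[ℝ] := ((‖D‖⁻¹ : ℝ) : ℍ[ℝ]) * D with hD'
  have hnorm : ‖D'‖ = 1 := by
    rw [hD', norm_mul, Quaternion.norm_coe, norm_inv, Real.norm_eq_abs,
      abs_of_nonneg (norm_nonneg D)]
    exact inv_mul_cancel₀ (norm_ne_zero_iff.mpr hD)
  have hD'ne : D' ≠ 0 := by
    intro h0; rw [h0, norm_zero] at hnorm; norm_num at hnorm
  refine ⟨D', hnorm, fun k => ?_⟩
  have key : D' * x k = y k * D' := by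
    rw [hD', mul_assoc, ← h k, ← mul_assoc, Quaternion.coe_commutes, mul_assoc]
  rw [key, mul_assoc, mul_inv_cancel₀ hD'ne, mul_one]

end HandlebodyAux

/-- The map `(B₁, …, B_g) ↦ [(B₁, …, B_g, 𝐢, 𝐣, −𝐤)]` is a bijection from `Sp(1)^g` onto the
quotient of `S5 g` by simultaneous conjugation: `L_α ≅ (S³)^g`. -/
theorem handlebody_lagrangian_is_S3_power (g : ℕ) :
    Function.Bijective (fun B : {B : Fin g → ℍ[ℝ] // ∀ k, ‖B k‖ = 1} =>
      Quotient.mk (conjSetoidOn (S5 g)) ⟨Sum.elim B.val ![qi, qj, -qk], mem_S5 B⟩) := by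
  open HandlebodyAux in
  constructor
  · -- Injectivity
    intro B1 B2 h
    obtain ⟨D, hDn, hD⟩ := Quotient.exact h
    have hDne : D ≠ 0 := by
      intro h0; rw [h0, norm_zero] at hDn; norm_num at hDn
    have e1 : qi = D * qi * D⁻¹ := by simpa using hD (Sum.inr 0)
    have e2 : qj = D * qj * D⁻¹ := by simpa using hD (Sum.inr 1)
    have c1 : qi * D = D * qi := by
      conv_lhs => rw [e1]
      rw [mul_assoc, inv_mul_cancel₀ hDne, mul_one]
    have c2 : qj * D = D * qj := by
      conv_lhs => rw [e2]
      rw [mul_assoc, inv_mul_cancel₀ hDne, mul_one]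
    have hJ : D.imJ = 0 := by
      have := congrArg QuaternionAlgebra.imK c1
      simp only [Quaternion.imK_mul] at this; simp [qi] at this
      linarith
    have hK : D.imK = 0 := by
      have := congrArg QuaternionAlgebra.imJ c1
      simp only [Quaternion.imJ_mul] at this; simp [qi] at this
      linarith
    have hI : D.imI = 0 := by
      have := congrArg QuaternionAlgebra.imK c2
      simp only [Quaternion.imK_mul] at this; simp [qj] at this
      linarith
    have hDcoe : D = ((D.re : ℝ) : ℍ[ℝ]) := by
      ext <;> simp [hI, hJ, hK]
    have hre_ne : ((D.re : ℝ) : ℍ[ℝ]) ≠ 0 := hDcoe ▸ hDne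
    apply Subtype.ext; funext k
    have e3 : B2.val k = D * B1.val k * D⁻¹ := by simpa using hD (Sum.inl k)
    rw [e3, hDcoe, Quaternion.coe_commutes, mul_assoc,
      mul_inv_cancel₀ hre_ne, mul_one]
  · -- Surjectivity
    intro z
    induction z using Quotient.ind with
    | _ w =>
      obtain ⟨x, hx⟩ := w
      obtain ⟨hB, hC, hmul⟩ := hx
      set p := x (Sum.inr 0) with hp
      set q := x (Sum.inr 1) with hq
      set r := x (Sum.inr 2) with hr
      have hpn : ‖p‖ = 1 := (hC 0).1
      have hpr : p.re = 0 := (hC 0).2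
      have hqn : ‖q‖ = 1 := (hC 1).1
      have hqr : q.re = 0 := (hC 1).2
      have hrn : ‖r‖ = 1 := (hC 2).1
      have hrr : r.re = 0 := (hC 2).2
      have hr2 : r * -r = 1 := by
        rw [mul_neg, sq_eq_neg_one hrn hrr, neg_neg]
      have hinv1 : r⁻¹ = -r := inv_eq_of_mul_eq_one_right hr2
      have hinv2 : (p * q)⁻¹ = r := inv_eq_of_mul_eq_one_right hmul
      have hpqr : p * q = -r := by
        rw [← hinv1, ← hinv2, inv_inv]
      have hpq : (p * q).re = 0 := by rw [hpqr]; simp [hrr]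
      obtain ⟨D, hDne, hDi, hDj⟩ := exists_conj_pair hpn hpr hqn hqr hpq
      have hDnorm : ‖D‖ ≠ 0 := norm_ne_zero_iff.mpr hDne
      refine ⟨⟨fun k => D⁻¹ * x (Sum.inl k) * D, fun k => ?_⟩, ?_⟩
      · rw [norm_mul, norm_mul, norm_inv, hB k, mul_one, inv_mul_cancel₀ hDnorm]
      · apply Quotient.sound
        show uConj _ x
        apply uConj_of_ne_zero D hDne
        intro k
        match k with
        | Sum.inl k =>
          show x (Sum.inl k) * D = D * (D⁻¹ * x (Sum.inl k) * D)
          rw [← mul_assoc, ← mul_assoc, mul_inv_cancel₀ hDne, one_mul]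
        | Sum.inr 0 =>
          show p * D = D * qi
          rw [hDi]
        | Sum.inr 1 =>
          show q * D = D * qj
          rw [hDj]
        | Sum.inr 2 =>
          show r * D = D * -qk
          rw [qk_eq, mul_neg, ← mul_assoc, hDi, mul_assoc, hDj, ← mul_assoc,
            hpqr, neg_mul, neg_neg]
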